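/- Let θ = (l/9)π with gcd(l, 9) = 1, and let x = e^{2πi l/9}, a primitive 9th root of unity (satisfying x^6 + x^3 + 1 = 0). For nonnegative integers s_1, s_2, s_3, s_4: Σ_{j=1}^{4} s_j cos((2j−1)θ) = 0 if and only if s_1 = s_3 = s_4 and s_2 = 0. In particular Σ_{j=1}^{3} s_j cos((2j−1)θ) = 0 forces s_1 = s_2 = s_3 = 0. -/

import Mathlib

/-- No rational number satisfies q^3 = 3q + e for e = ±1. -/
lemma aux_no_rat_root (e : ℚ) (he : e = 1 ∨ e = -1) (q : ℚ) (h : q^3 = 3*q + e) : False := by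
  have hd0 : ((q.den : ℚ)) ≠ 0 := by exact_mod_cast q.den_nz
  have hq : (q.num : ℚ) / (q.den : ℚ) = q := Rat.num_div_den q
  have key : (q.num : ℚ)^3 = 3*(q.num)*(q.den)^2 + e*(q.den)^3 := by
    rw [← hq] at h
    field_simp at h
    have h2 : ((q.num:ℚ)^3 - (3*(q.num)*(q.den)^2 + e*(q.den)^3)) * (q.den:ℚ) = 0 := by
      linear_combination (q.den:ℚ) * h
    rcases mul_eq_zero.mp h2 with h3 | h3
    · linarith
    · exact absurd h3 hd0
  have hcop : (q.den).Coprime (q.num.natAbs ^ 3) := (q.reduced.symm).pow_right 3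
  rcases he with rfl | rfl
  · have kZ : q.num^3 = 3*q.num*q.den^2 + q.den^3 := by
      have : (q.num : ℚ)^3 = 3*(q.num)*(q.den)^2 + (q.den:ℚ)^3 := by linarith
      exact_mod_cast this
    have hdvd : (q.den : ℤ) ∣ q.num^3 := ⟨3*q.num*q.den + q.den^2, by linear_combination kZ⟩
    have hdvd' : q.den ∣ q.num.natAbs ^ 3 := by
      have := Int.natAbs_dvd_natAbs.mpr hdvd
      simpa [Int.natAbs_pow] using this
    have hden : q.den = 1 := Nat.Coprime.eq_one_of_dvd hcop hdvd'
    rw [hden] at kZ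
    push_cast at kZ
    have hu : q.num ∣ 1 := ⟨q.num^2 - 3, by linear_combination -kZ⟩
    rcases Int.isUnit_iff.mp (isUnit_of_dvd_one hu) with h1 | h1 <;> rw [h1] at kZ <;> norm_num at kZ
  · have kZ : q.num^3 = 3*q.num*q.den^2 - q.den^3 := by
      have : (q.num : ℚ)^3 = 3*(q.num)*(q.den)^2 - (q.den:ℚ)^3 := by linarith
      exact_mod_cast this
    have hdvd : (q.den : ℤ) ∣ q.num^3 := ⟨3*q.num*q.den - q.den^2, by linear_combination kZ⟩
    have hdvd' : q.den ∣ q.num.natAbs ^ 3 := by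
      have := Int.natAbs_dvd_natAbs.mpr hdvd
      simpa [Int.natAbs_pow] using this
    have hden : q.den = 1 := Nat.Coprime.eq_one_of_dvd hcop hdvd'
    rw [hden] at kZ
    push_cast at kZ
    have hu : q.num ∣ 1 := ⟨3 - q.num^2, by linear_combination kZ⟩
    rcases Int.isUnit_iff.mp (isUnit_of_dvd_one hu) with h1 | h1 <;> rw [h1] at kZ <;> norm_num at kZ

/-- If t^3 = 3t + e with e = ±1, then 1, t, t² are linearly independent over ℤ. -/
lemma aux_cubic_indep (e : ℚ) (he : e = 1 ∨ e = -1) (t : ℝ)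
    (ht : t^3 = 3*t + (e:ℝ)) (A B C : ℤ)
    (h : (A:ℝ)*t^2 + (B:ℝ)*t + (C:ℝ) = 0) : A = 0 ∧ B = 0 ∧ C = 0 := by
  have hirr : ∀ q : ℚ, t ≠ (q:ℝ) := by
    intro q hq
    apply aux_no_rat_root e he q
    have h0 : ((q^3 - 3*q - e : ℚ) : ℝ) = 0 := by
      push_cast
      rw [← hq]
      linarith
    have h1 : (q^3 - 3*q - e : ℚ) = 0 := by exact_mod_cast h0
    linarith
  by_cases hA : A = 0
  · subst hA
    by_cases hB : B = 0
    · subst hB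
      refine ⟨rfl, rfl, ?_⟩
      have : (C:ℝ) = 0 := by simpa using h
      exact_mod_cast this
    · exfalso
      apply hirr ((-C : ℚ)/(B : ℚ))
      have hB' : (B:ℝ) ≠ 0 := Int.cast_ne_zero.mpr hB
      push_cast
      field_simp
      push_cast at h
      linarith
  · exfalso
    have hK : ((3*A^2 + A*C - B^2 : ℤ) : ℝ) * t + ((e:ℝ)*(A:ℝ)^2 - (B:ℝ)*(C:ℝ)) = 0 := by
      push_cast
      linear_combination ((A:ℝ)*t - B)*h - (A:ℝ)^2*ht
    set K : ℤ := 3*A^2 + A*C - B^2 with hKdef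
    by_cases hK0 : K = 0
    · rw [hK0] at hK
      have h1 : (e:ℚ)*(A:ℚ)^2 = (B:ℚ)*(C:ℚ) := by
        have : ((e*(A:ℚ)^2 - (B:ℚ)*(C:ℚ) : ℚ) : ℝ) = 0 := by push_cast; linear_combination hK
        have := (Rat.cast_eq_zero (α := ℝ)).mp this
        linarith
      have h2 : (B:ℚ)^2 - (A:ℚ)*(C:ℚ) = 3*(A:ℚ)^2 := by
        have h0 : (3*A^2 + A*C - B^2 : ℤ) = 0 := by rw [← hKdef]; exact hK0
        have : ((3*A^2 + A*C - B^2 : ℤ) : ℚ) = 0 := by exact_mod_cast h0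
        push_cast at this
        linarith
      apply aux_no_rat_root e he ((B:ℚ)/(A:ℚ))
      have hA' : (A:ℚ) ≠ 0 := Int.cast_ne_zero.mpr hA
      field_simp
      linear_combination (B:ℚ)*h2 - (A:ℚ)*h1
    · apply hirr (((B:ℚ)*(C:ℚ) - e*(A:ℚ)^2)/((K:ℚ)))
      have hK' : (K:ℝ) ≠ 0 := Int.cast_ne_zero.mpr hK0
      push_cast
      field_simp
      linear_combination hK

theorem nine_cos_combination (l : ℕ) (hl : Nat.Coprime l 9)
    (θ : ℝ) (hθ : θ = (l : ℝ) * Real.pi / 9) :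
    (∀ s₁ s₂ s₃ s₄ : ℕ,
      ((s₁ : ℝ) * Real.cos θ + (s₂ : ℝ) * Real.cos (3 * θ)
        + (s₃ : ℝ) * Real.cos (5 * θ) + (s₄ : ℝ) * Real.cos (7 * θ) = 0
        ↔ (s₁ = s₃ ∧ s₃ = s₄ ∧ s₂ = 0))) ∧
    (∀ s₁ s₂ s₃ : ℕ,
      (s₁ : ℝ) * Real.cos θ + (s₂ : ℝ) * Real.cos (3 * θ)
        + (s₃ : ℝ) * Real.cos (5 * θ) = 0 → s₁ = 0 ∧ s₂ = 0 ∧ s₃ = 0) := by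
  have h3l : ¬ (3 ∣ l) := by
    intro h
    have h' : (3:ℕ) ∣ Nat.gcd l 9 := Nat.dvd_gcd h (by norm_num)
    rw [Nat.Coprime] at hl
    rw [hl] at h'
    omega
  -- reduce cos (3θ) = cos (l π / 3) to cos ((l % 6) π / 3)
  have hsplit : Real.cos (3 * θ) = Real.cos (((l % 6 : ℕ) : ℝ) * Real.pi / 3) := by
    have hl6 : (l : ℝ) = 6 * ((l / 6 : ℕ) : ℝ) + ((l % 6 : ℕ) : ℝ) := by
      exact_mod_cast (Nat.div_add_mod l 6).symm
    have : 3 * θ = ((l % 6 : ℕ) : ℝ) * Real.pi / 3 + (((l / 6 : ℕ) : ℤ) : ℝ) * (2 * Real.pi) := by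
      rw [hθ, Int.cast_natCast, hl6]; ring
    rw [this, Real.cos_add_int_mul_two_pi]
  have hr : l % 6 = 1 ∨ l % 6 = 2 ∨ l % 6 = 4 ∨ l % 6 = 5 := by omega
  obtain ⟨e, hepm, hee⟩ : ∃ e : ℚ, (e = 1 ∨ e = -1)
      ∧ Real.cos (3 * θ) = (e : ℝ) / 2 := by
    rcases hr with h6 | h6 | h6 | h6
    · refine ⟨1, Or.inl rfl, ?_⟩
      rw [hsplit, h6]
      push_cast
      rw [show (1:ℝ) * Real.pi / 3 = Real.pi / 3 by ring, Real.cos_pi_div_three]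
    · refine ⟨-1, Or.inr rfl, ?_⟩
      rw [hsplit, h6]
      push_cast
      rw [show (2:ℝ) * Real.pi / 3 = Real.pi - Real.pi / 3 by ring, Real.cos_pi_sub,
        Real.cos_pi_div_three]
      norm_num
    · refine ⟨-1, Or.inr rfl, ?_⟩
      rw [hsplit, h6]
      push_cast
      rw [show (4:ℝ) * Real.pi / 3 = Real.pi + Real.pi / 3 by ring]
      rw [Real.cos_add, Real.cos_pi, Real.sin_pi, Real.cos_pi_div_three]
      norm_num
    · refine ⟨1, Or.inl rfl, ?_⟩
      rw [hsplit, h6]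
      push_cast
      rw [show (5:ℝ) * Real.pi / 3 = -(Real.pi / 3) + (1:ℤ) * (2 * Real.pi) by push_cast; ring]
      rw [Real.cos_add_int_mul_two_pi, Real.cos_neg, Real.cos_pi_div_three]
  set c := Real.cos θ with hc
  set ε := Real.cos (3 * θ) with hεdef
  have hε3 : ε = 4 * c ^ 3 - 3 * c := by
    rw [hεdef, hc, Real.cos_three_mul]
  have he2 : (e : ℝ) ^ 2 = 1 := by rcases hepm with rfl | rfl <;> norm_num
  have hε2 : ε ^ 2 = 1 / 4 := by rw [hee]; rw [div_pow, he2]; norm_num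
  have h2θ : Real.cos (2 * θ) = 2 * c ^ 2 - 1 := by rw [Real.cos_two_mul]
  have h5 : Real.cos (5 * θ) = 4 * ε * c ^ 2 - 2 * ε - c := by
    have hadd := Real.cos_add_cos (5 * θ) θ
    rw [show (5 * θ + θ) / 2 = 3 * θ by ring, show (5 * θ - θ) / 2 = 2 * θ by ring,
      h2θ, ← hεdef, ← hc] at hadd
    linarith
  have h4θ : Real.cos (4 * θ) = 2 * (2 * c ^ 2 - 1) ^ 2 - 1 := by
    rw [show (4:ℝ) * θ = 2 * (2 * θ) by ring, Real.cos_two_mul, h2θ]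
  have h7 : Real.cos (7 * θ) = -4 * ε * c ^ 2 + 2 * ε := by
    have hadd := Real.cos_add_cos (7 * θ) θ
    rw [show (7 * θ + θ) / 2 = 4 * θ by ring, show (7 * θ - θ) / 2 = 3 * θ by ring,
      h4θ, ← hεdef, ← hc] at hadd
    linear_combination hadd - 4 * ε * c * hε3 + 4 * c * hε2
  have main : ∀ s₁ s₂ s₃ s₄ : ℕ,
      ((s₁ : ℝ) * c + (s₂ : ℝ) * ε
        + (s₃ : ℝ) * Real.cos (5 * θ) + (s₄ : ℝ) * Real.cos (7 * θ) = 0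
        ↔ (s₁ = s₃ ∧ s₃ = s₄ ∧ s₂ = 0)) := by
    intro s₁ s₂ s₃ s₄
    constructor
    · intro hsum
      rw [h5, h7] at hsum
      rcases hepm with rfl | rfl
      · have hεr : ε = 1 / 2 := by rw [hee]; norm_num
        have ht : (2 * c) ^ 3 = 3 * (2 * c) + ((1 : ℚ) : ℝ) := by
          push_cast
          linear_combination -2 * hε3 + 2 * hεr
        have hE : (((s₃ : ℤ) - s₄ : ℤ) : ℝ) * (2 * c) ^ 2
            + (((s₁ : ℤ) - s₃ : ℤ) : ℝ) * (2 * c)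
            + (((s₂ : ℤ) - 2 * s₃ + 2 * s₄ : ℤ) : ℝ) = 0 := by
          rw [hεr] at hsum
          push_cast
          linear_combination 2 * hsum
        obtain ⟨hA, hB, hC⟩ := aux_cubic_indep 1 (Or.inl rfl) (2 * c) ht _ _ _ hE
        refine ⟨?_, ?_, ?_⟩ <;> omega
      · have hεr : ε = -(1 / 2) := by rw [hee]; norm_num
        have ht : (2 * c) ^ 3 = 3 * (2 * c) + ((-1 : ℚ) : ℝ) := by
          push_cast
          linear_combination -2 * hε3 + 2 * hεr
        have hE : (((s₄ : ℤ) - s₃ : ℤ) : ℝ) * (2 * c) ^ 2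
            + (((s₁ : ℤ) - s₃ : ℤ) : ℝ) * (2 * c)
            + ((2 * (s₃ : ℤ) - 2 * s₄ - s₂ : ℤ) : ℝ) = 0 := by
          rw [hεr] at hsum
          push_cast
          linear_combination 2 * hsum
        obtain ⟨hA, hB, hC⟩ := aux_cubic_indep (-1) (Or.inr rfl) (2 * c) ht _ _ _ hE
        refine ⟨?_, ?_, ?_⟩ <;> omega
    · rintro ⟨h13, h34, h20⟩
      subst h13
      subst h34
      subst h20
      rw [h5, h7]
      push_cast
      ring
  constructor
  · exact main
  · intro s₁ s₂ s₃ h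
    have h0 := (main s₁ s₂ s₃ 0).mp (by push_cast; linarith)
    omega
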